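/- arXiv:0905.3897 — 3 statements merged into one kernel-verified Lean document; each statement's English description precedes it below -/
import Mathlib

section
/- Let X be a compact topological space, let H and H' be real separable Hilbert spaces, and let L : X → B(H, H') be a family of bounded operators that is continuous in the operator norm and such that L_x is Fredholm for every x ∈ X. Then there exists a finite-dimensional linear subspace V of H' that is transverse to the family, i.e. Im(L_x) + V = H' for every x ∈ X. -/
open ContinuousLinearMap

/-- Surjectivity of bounded operators from a Banach space is an open condition. -/
lemma aux_surj_open {E F : Type*} [NormedAddCommGroup E] [NormedSpace ℝ E] [CompleteSpace E]
    [NormedAddCommGroup F] [NormedSpace ℝ F] [CompleteSpace F]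
    (T : E →L[ℝ] F) (hT : LinearMap.range (T : E →ₗ[ℝ] F) = ⊤) :
    ∃ ε > 0, ∀ S : E →L[ℝ] F, ‖S - T‖ < ε → LinearMap.range (S : E →ₗ[ℝ] F) = ⊤ := by
  obtain ⟨fsymm, hpos⟩ := T.exists_nonlinearRightInverse_of_surjective hT
  have hNpos : (0:ℝ) < (fsymm.nnnorm : ℝ) := by exact_mod_cast hpos
  refine ⟨(fsymm.nnnorm : ℝ)⁻¹, by positivity, fun S hS => ?_⟩
  rw [LinearMap.range_eq_top]
  intro y
  have happrox : ApproximatesLinearOn S T Set.univ ‖S - T‖₊ := by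
    intro a _ b _
    have h1 : S a - S b - T (a - b) = (S - T) (a - b) := by
      simp only [map_sub, ContinuousLinearMap.sub_apply]; abel
    rw [h1]
    exact (S - T).le_opNorm _
  set d : ℝ := (fsymm.nnnorm : ℝ)⁻¹ - ‖S - T‖ with hd
  have hdpos : 0 < d := by simp [hd]; linarith
  set r : ℝ := ‖y - S 0‖ / d with hr
  have hr0 : 0 ≤ r := div_nonneg (norm_nonneg _) hdpos.le
  have hsurj := happrox.surjOn_closedBall_of_nonlinearRightInverse fsymm hr0
    (Set.subset_univ (Metric.closedBall 0 r))
  have hy : y ∈ Metric.closedBall (S 0) (((fsymm.nnnorm : ℝ)⁻¹ - ‖S - T‖₊) * r) := by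
    rw [Metric.mem_closedBall, dist_eq_norm]
    have : ((fsymm.nnnorm : ℝ)⁻¹ - ‖S - T‖₊) * r = d * r := by
      simp [hd, coe_nnnorm]
    rw [this, hr, mul_div_cancel₀ _ hdpos.ne']
  obtain ⟨x, _, hx⟩ := hsurj hy
  exact ⟨x, hx⟩

/-- For a norm-continuous family `L : X → B(H, H')` of bounded
Fredholm operators between real separable Hilbert spaces, parameterized by a
compact topological space `X`, there is a finite-dimensional subspace `V ⊆ H'`
transverse to the whole family: `Im(L x) + V = H'` for all `x`. -/
theorem exists_finiteDimensional_transverse_subspace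
    {X H H' : Type*} [TopologicalSpace X] [CompactSpace X]
    [NormedAddCommGroup H] [InnerProductSpace ℝ H] [CompleteSpace H]
    [TopologicalSpace.SeparableSpace H]
    [NormedAddCommGroup H'] [InnerProductSpace ℝ H'] [CompleteSpace H']
    [TopologicalSpace.SeparableSpace H']
    (L : X → H →L[ℝ] H') (hL : Continuous L)
    (hker : ∀ x, FiniteDimensional ℝ (LinearMap.ker (L x : H →ₗ[ℝ] H')))
    (hran : ∀ x, IsClosed (LinearMap.range (L x : H →ₗ[ℝ] H') : Set H'))
    (hcoker : ∀ x, FiniteDimensional ℝ (H' ⧸ LinearMap.range (L x : H →ₗ[ℝ] H'))) :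
    ∃ V : Submodule ℝ H', FiniteDimensional ℝ V ∧
      ∀ x, LinearMap.range (L x : H →ₗ[ℝ] H') ⊔ V = ⊤ := by
  -- For each point, a finite-dimensional subspace works on a neighbourhood.
  have key : ∀ x₀ : X, ∃ (V₀ : Submodule ℝ H'), FiniteDimensional ℝ V₀ ∧
      ∃ U : Set X, IsOpen U ∧ x₀ ∈ U ∧ ∀ y ∈ U, LinearMap.range (L y : H →ₗ[ℝ] H') ⊔ V₀ = ⊤ := by
    intro x₀
    haveI : CompleteSpace (LinearMap.range (L x₀ : H →ₗ[ℝ] H')) := (hran x₀).completeSpace_coe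
    have hcompl : IsCompl (LinearMap.range (L x₀ : H →ₗ[ℝ] H')) (LinearMap.range (L x₀ : H →ₗ[ℝ] H'))ᗮ :=
      Submodule.isCompl_orthogonal_of_hasOrthogonalProjection
    set V₀ : Submodule ℝ H' := (LinearMap.range (L x₀ : H →ₗ[ℝ] H'))ᗮ with hV₀
    haveI hfd : FiniteDimensional ℝ V₀ := by
      haveI := hcoker x₀
      exact LinearEquiv.finiteDimensional
        (Submodule.quotientEquivOfIsCompl _ _ hcompl)
    -- the combined operator
    set T : X → (H × V₀) →L[ℝ] H' := fun x => (L x).coprod V₀.subtypeL with hT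
    have hrangeT : ∀ x, LinearMap.range (T x : (H × V₀) →ₗ[ℝ] H') = LinearMap.range (L x : H →ₗ[ℝ] H') ⊔ V₀ := by
      intro x
      rw [hT]
      simp [ContinuousLinearMap.range_coprod, Submodule.range_subtypeL, LinearMap.range_coprod, Submodule.range_subtype]
    have hTcont : Continuous T := by
      have hTeq : T = fun x =>
          ((ContinuousLinearMap.compL ℝ (H × V₀) H H').flip
            (ContinuousLinearMap.fst ℝ H V₀)) (L x)
            + V₀.subtypeL.comp (ContinuousLinearMap.snd ℝ H V₀) := by
        funext x
        ext v
        · simp [hT]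
        · simp [hT]
      rw [hTeq]
      exact (((ContinuousLinearMap.compL ℝ (H × V₀) H H').flip
        (ContinuousLinearMap.fst ℝ H V₀)).continuous.comp hL).add continuous_const
    have hTsurj : LinearMap.range (T x₀ : (H × V₀) →ₗ[ℝ] H') = ⊤ := by
      rw [hrangeT]; exact hcompl.sup_eq_top
    obtain ⟨ε, hε, hstab⟩ := aux_surj_open (T x₀) hTsurj
    refine ⟨V₀, hfd, T ⁻¹' Metric.ball (T x₀) ε, (Metric.isOpen_ball).preimage hTcont,
      by simp [Metric.mem_ball, hε], fun y hy => ?_⟩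
    rw [← hrangeT]
    exact hstab (T y) (by rw [← dist_eq_norm]; exact hy)
  choose V₀ hfd U hUopen hxU hU using key
  obtain ⟨t, ht⟩ := IsCompact.elim_finite_subcover isCompact_univ U hUopen
    (fun x _ => Set.mem_iUnion.2 ⟨x, hxU x⟩)
  haveI := fun x₀ : X => hfd x₀
  refine ⟨t.sup V₀, inferInstance, fun x => ?_⟩
  obtain ⟨x₀, hx₀t, hxU₀⟩ := Set.mem_iUnion₂.1 (ht (Set.mem_univ x))
  refine le_antisymm le_top ?_
  rw [← hU x₀ x hxU₀]
  exact sup_le_sup_left (Finset.le_sup hx₀t) _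
end

section
/- Let H and H' be real Hilbert spaces, let T : H → H' be a bounded Fredholm operator, and let V be a finite-dimensional linear subspace of H' with Im(T) + V = H'. Then the preimage T⁻¹(V) is a finite-dimensional subspace of H, and dim T⁻¹(V) = dim V + ind(T), where ind(T) = dim ker T − codim Im(T) is the Fredholm index of T. -/
/-- If `T : H → H'` is a bounded Fredholm operator between real
Hilbert spaces and `V ⊆ H'` is a finite-dimensional subspace with
`Im(T) + V = H'`, then `T⁻¹(V)` is finite-dimensional and
`dim T⁻¹(V) = dim V + ind(T)`, where `ind(T) = dim ker T − codim Im(T)`. -/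
theorem finrank_comap_eq_finrank_add_index
    {H H' : Type*}
    [NormedAddCommGroup H] [InnerProductSpace ℝ H] [CompleteSpace H]
    [NormedAddCommGroup H'] [InnerProductSpace ℝ H'] [CompleteSpace H']
    (T : H →L[ℝ] H')
    (hker : FiniteDimensional ℝ (LinearMap.ker (T : H →ₗ[ℝ] H')))
    (hran : IsClosed (LinearMap.range (T : H →ₗ[ℝ] H') : Set H'))
    (hcoker : FiniteDimensional ℝ (H' ⧸ LinearMap.range (T : H →ₗ[ℝ] H')))
    (V : Submodule ℝ H') (hV : FiniteDimensional ℝ V)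
    (htrans : LinearMap.range (T : H →ₗ[ℝ] H') ⊔ V = ⊤) :
    FiniteDimensional ℝ (Submodule.comap (T : H →ₗ[ℝ] H') V) ∧
      (Module.finrank ℝ (Submodule.comap (T : H →ₗ[ℝ] H') V) : ℤ) =
        (Module.finrank ℝ V : ℤ) +
          ((Module.finrank ℝ (LinearMap.ker (T : H →ₗ[ℝ] H')) : ℤ) -
            (Module.finrank ℝ (H' ⧸ LinearMap.range (T : H →ₗ[ℝ] H')) : ℤ)) := by
  classical
  set f : H →ₗ[ℝ] H' := (T : H →ₗ[ℝ] H') with hfdef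
  set W : Submodule ℝ H := Submodule.comap f V with hWdef
  -- the restriction of f to W
  set g : W →ₗ[ℝ] H' := f.domRestrict W with hgdef
  have hkerle : LinearMap.ker f ≤ W := by
    intro x hx
    simp only [hWdef, Submodule.mem_comap]
    rw [LinearMap.mem_ker.mp hx]
    exact V.zero_mem
  have hkerg : LinearMap.ker g = Submodule.comap W.subtype (LinearMap.ker f) :=
    LinearMap.ker_domRestrict W f
  have hrangeg : LinearMap.range g = Submodule.map f W :=
    LinearMap.range_domRestrict W f
  have hmapW : Submodule.map f W = LinearMap.range f ⊓ V := Submodule.map_comap_eq f V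
  -- kernel of g is equivalent to ker f
  have ekg : (LinearMap.ker g) ≃ₗ[ℝ] (LinearMap.ker f) := by
    rw [hkerg]
    exact Submodule.comapSubtypeEquivOfLe hkerle
  -- range of g is finite dimensional (it is contained in V)
  have hrange_le : LinearMap.range g ≤ V := by
    rw [hrangeg, hmapW]; exact inf_le_right
  have hrfd : FiniteDimensional ℝ (LinearMap.range g) :=
    Submodule.finiteDimensional_of_le hrange_le
  haveI hkerf : FiniteDimensional ℝ (LinearMap.ker f) := hker
  have hkfd : FiniteDimensional ℝ (LinearMap.ker g) := ekg.symm.finiteDimensional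
  -- W is finite dimensional
  have hWfd : FiniteDimensional ℝ W := by
    have h1 : (Submodule.map g ⊤).FG := by
      rw [Submodule.map_top]
      exact Module.Finite.iff_fg.mp hrfd
    have h2 : ((⊤ : Submodule ℝ W) ⊓ LinearMap.ker g).FG := by
      rw [top_inf_eq]
      exact Module.Finite.iff_fg.mp hkfd
    exact Module.finite_def.mpr (Submodule.fg_of_fg_map_of_fg_inf_ker g h1 h2)
  refine ⟨hWfd, ?_⟩
  -- rank-nullity for g
  have hrn : Module.finrank ℝ (LinearMap.range g) + Module.finrank ℝ (LinearMap.ker g)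
      = Module.finrank ℝ W := LinearMap.finrank_range_add_finrank_ker g
  have hk : Module.finrank ℝ (LinearMap.ker g) = Module.finrank ℝ (LinearMap.ker f) :=
    ekg.finrank_eq
  -- second isomorphism theorem : V / (V ⊓ range f) ≃ (V ⊔ range f) / range f
  have e2 := LinearMap.quotientInfEquivSupQuotient V (LinearMap.range f)
  have hsup : V ⊔ LinearMap.range f = ⊤ := by rw [sup_comm]; exact htrans
  -- identify (V ⊔ range f) ⧸ (range f) with H' ⧸ range f
  let eT : (V ⊔ LinearMap.range f : Submodule ℝ H') ≃ₗ[ℝ] H' :=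
    (LinearEquiv.ofEq _ ⊤ hsup).trans Submodule.topEquiv
  have hmapeT : Submodule.map (eT : _ →ₗ[ℝ] H')
      (Submodule.comap (V ⊔ LinearMap.range f).subtype (LinearMap.range f))
      = LinearMap.range f := by
    ext x
    simp only [Submodule.mem_map, Submodule.mem_comap]
    constructor
    · rintro ⟨y, hy, rfl⟩
      exact hy
    · intro hx
      exact ⟨⟨x, by rw [hsup]; trivial⟩, hx, rfl⟩
  have e3 : ((V ⊔ LinearMap.range f : Submodule ℝ H') ⧸
        Submodule.comap (V ⊔ LinearMap.range f).subtype (LinearMap.range f)) ≃ₗ[ℝ]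
      (H' ⧸ LinearMap.range f) :=
    Submodule.Quotient.equiv _ _ eT hmapeT
  have hquot : Module.finrank ℝ
        ((V : Submodule ℝ H') ⧸ Submodule.comap V.subtype (V ⊓ LinearMap.range f))
      = Module.finrank ℝ (H' ⧸ LinearMap.range f) :=
    (e2.trans e3).finrank_eq
  have hVsplit : Module.finrank ℝ
        ((V : Submodule ℝ H') ⧸ Submodule.comap V.subtype (V ⊓ LinearMap.range f))
      + Module.finrank ℝ (Submodule.comap V.subtype (V ⊓ LinearMap.range f))
      = Module.finrank ℝ V :=
    Submodule.finrank_quotient_add_finrank _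
  -- identify range g with V ⊓ range f as a submodule of V
  have h1 : LinearMap.range g = V ⊓ LinearMap.range f := by
    rw [hrangeg, hmapW, inf_comm]
  have erg : (LinearMap.range g) ≃ₗ[ℝ]
      (Submodule.comap V.subtype (V ⊓ LinearMap.range f)) :=
    (LinearEquiv.ofEq _ _ h1).trans (Submodule.comapSubtypeEquivOfLe inf_le_left).symm
  have hr : Module.finrank ℝ (LinearMap.range g)
      = Module.finrank ℝ (Submodule.comap V.subtype (V ⊓ LinearMap.range f)) :=
    erg.finrank_eq
  -- put everything together
  have hW' : (Module.finrank ℝ W : ℤ)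
      = (Module.finrank ℝ (Submodule.comap V.subtype (V ⊓ LinearMap.range f)) : ℤ)
        + (Module.finrank ℝ (LinearMap.ker f) : ℤ) := by
    rw [← hrn, hk, hr]; push_cast; ring
  have hV' : (Module.finrank ℝ V : ℤ)
      = (Module.finrank ℝ (H' ⧸ LinearMap.range f) : ℤ)
        + (Module.finrank ℝ (Submodule.comap V.subtype (V ⊓ LinearMap.range f)) : ℤ) := by
    rw [← hVsplit, hquot]; push_cast; ring
  show (Module.finrank ℝ W : ℤ) = _
  rw [hW', hV']; ring
end

section
/- Let H be a real separable Hilbert space and let L : [0,1] → B(H) be a continuously differentiable path of bounded self-adjoint Fredholm operators all of whose crossing points are regular, i.e. for every t with ker L(t) ≠ {0} the quadratic form u ↦ ⟨L'(t)u, u⟩ restricted to ker L(t) is nondegenerate. Then the set of crossing points {t ∈ [0,1] : ker L(t) ≠ {0}} is finite. -/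
open scoped RealInnerProductSpace

open Filter Topology

set_option maxHeartbeats 1000000

/-- Let `L : [0,1] → B(H)` be a `C¹` path (with derivative `L'`)
of bounded self-adjoint Fredholm operators on a real separable Hilbert space,
all of whose crossing points are regular: whenever `ker L(t) ≠ 0`, the quadratic
form `u ↦ ⟨L'(t)u, u⟩` restricted to `ker L(t)` is nondegenerate. Then the set
of crossing points `{t ∈ [0,1] : ker L(t) ≠ 0}` is finite. -/
theorem crossing_points_finite_of_regular
    {H : Type*} [NormedAddCommGroup H] [InnerProductSpace ℝ H]
    [CompleteSpace H] [TopologicalSpace.SeparableSpace H]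
    (L L' : ℝ → H →L[ℝ] H)
    (hderiv : ∀ t ∈ Set.Icc (0 : ℝ) 1, HasDerivWithinAt L (L' t) (Set.Icc 0 1) t)
    (hcont : ContinuousOn L' (Set.Icc 0 1))
    (hsa : ∀ t ∈ Set.Icc (0 : ℝ) 1, IsSelfAdjoint (L t))
    (hker : ∀ t ∈ Set.Icc (0 : ℝ) 1, FiniteDimensional ℝ (LinearMap.ker (L t : H →ₗ[ℝ] H)))
    (hran : ∀ t ∈ Set.Icc (0 : ℝ) 1, IsClosed (LinearMap.range (L t : H →ₗ[ℝ] H) : Set H))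
    (hcoker : ∀ t ∈ Set.Icc (0 : ℝ) 1,
      FiniteDimensional ℝ (H ⧸ LinearMap.range (L t : H →ₗ[ℝ] H)))
    (hreg : ∀ t ∈ Set.Icc (0 : ℝ) 1, ∀ u ∈ LinearMap.ker (L t : H →ₗ[ℝ] H),
      (∀ v ∈ LinearMap.ker (L t : H →ₗ[ℝ] H), ⟪L' t u, v⟫ = 0) → u = 0) :
    {t ∈ Set.Icc (0 : ℝ) 1 | LinearMap.ker (L t : H →ₗ[ℝ] H) ≠ ⊥}.Finite := by
  set S := {t ∈ Set.Icc (0 : ℝ) 1 | LinearMap.ker (L t : H →ₗ[ℝ] H) ≠ ⊥} with hS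
  by_contra hinf
  rw [← Set.not_infinite, not_not] at hinf
  -- get an accumulation point `t₀ ∈ [0,1]` of the set of crossings
  obtain ⟨t₀, ht₀, hacc⟩ :=
    hinf.exists_accPt_of_subset_isCompact isCompact_Icc (fun t ht => ht.1)
  -- extract a sequence `τ n ∈ S \ {t₀}` converging to `t₀`
  have hclosure : t₀ ∈ closure (S \ {t₀}) := by
    rw [mem_closure_iff_clusterPt, ClusterPt]
    have heq : 𝓝 t₀ ⊓ 𝓟 (S \ {t₀}) = 𝓝[≠] t₀ ⊓ 𝓟 S := by
      rw [nhdsWithin, inf_assoc, inf_principal, Set.diff_eq, Set.inter_comm S {t₀}ᶜ]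
    rw [heq]
    exact hacc
  obtain ⟨τ, hτmem, hτ⟩ := mem_closure_iff_seq_limit.mp hclosure
  have hτIcc : ∀ n, τ n ∈ Set.Icc (0 : ℝ) 1 := fun n => (hτmem n).1.1
  have hτne : ∀ n, τ n ≠ t₀ := fun n => (hτmem n).2
  -- choose unit kernel vectors
  have hu : ∀ n, ∃ u : H, L (τ n) u = 0 ∧ ‖u‖ = 1 := by
    intro n
    obtain ⟨x, hx, hx0⟩ := Submodule.ne_bot_iff _ |>.mp (hτmem n).1.2
    refine ⟨‖x‖⁻¹ • x, ?_, norm_smul_inv_norm hx0⟩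
    have hx' : L (τ n) x = 0 := LinearMap.mem_ker.mp hx
    simp [map_smul, hx']
  choose u hu0 hu1 using hu
  -- the kernel at `t₀`
  set K := LinearMap.ker (L t₀ : H →ₗ[ℝ] H) with hKdef
  haveI : FiniteDimensional ℝ K := hker t₀ ht₀
  -- boundedness below on the orthogonal complement
  have hbb : ∃ c : ℝ, 0 ≤ c ∧ ∀ w : H, w ∈ Kᗮ → ‖w‖ ≤ c * ‖L t₀ w‖ := by
    set R := LinearMap.range (L t₀ : H →ₗ[ℝ] H) with hRdef
    haveI : CompleteSpace R := (hran t₀ ht₀).completeSpace_coe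
    set f : Kᗮ →L[ℝ] R :=
      ((L t₀).comp Kᗮ.subtypeL).codRestrict R (fun x => LinearMap.mem_range_self _ _) with hf
    have hinj : LinearMap.ker (f : Kᗮ →ₗ[ℝ] R) = ⊥ := by
      rw [LinearMap.ker_eq_bot']
      intro x hx
      have hx1 : L t₀ (x : H) = 0 := by
        have := congrArg (Subtype.val) hx
        exact this
      have hx2 : (x : H) ∈ K := LinearMap.mem_ker.mpr hx1
      have : (x : H) = 0 := by
        have hd : Disjoint K Kᗮ := Submodule.orthogonal_disjoint K
        exact (Submodule.disjoint_def.mp hd) _ hx2 x.2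
      exact Subtype.ext this
    have hsurj : LinearMap.range (f : Kᗮ →ₗ[ℝ] R) = ⊤ := by
      rw [LinearMap.range_eq_top]
      rintro ⟨y, hy⟩
      obtain ⟨x, hx⟩ := hy
      refine ⟨⟨x - (K.orthogonalProjectionOnto x : H),
        K.sub_starProjection_mem_orthogonal x⟩, ?_⟩
      apply Subtype.ext
      have hPx : L t₀ ((K.orthogonalProjectionOnto x : H)) = 0 :=
        LinearMap.mem_ker.mp (K.orthogonalProjectionOnto x).2
      show L t₀ (x - (K.orthogonalProjectionOnto x : H)) = y
      rw [map_sub, hPx, sub_zero]; exact hx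
    set e := ContinuousLinearEquiv.ofBijective f hinj hsurj with he
    refine ⟨‖(e.symm : R →L[ℝ] Kᗮ)‖, norm_nonneg _, fun w hw => ?_⟩
    have h1 : e ⟨w, hw⟩ = f ⟨w, hw⟩ := by
      rw [he]; exact congrFun (ContinuousLinearEquiv.coeFn_ofBijective f hinj hsurj) _
    have h2 : (⟨w, hw⟩ : Kᗮ) = e.symm (e ⟨w, hw⟩) := (e.symm_apply_apply _).symm
    calc ‖w‖ = ‖(⟨w, hw⟩ : Kᗮ)‖ := rfl
      _ = ‖e.symm (e ⟨w, hw⟩)‖ := by rw [← h2]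
      _ ≤ ‖(e.symm : R →L[ℝ] Kᗮ)‖ * ‖e ⟨w, hw⟩‖ :=
          (e.symm : R →L[ℝ] Kᗮ).le_opNorm _
      _ = ‖(e.symm : R →L[ℝ] Kᗮ)‖ * ‖L t₀ w‖ := by rw [h1]; rfl
  obtain ⟨c, hc0, hc⟩ := hbb
  -- convergence facts
  have hτt : Tendsto τ atTop (𝓝[Set.Icc (0:ℝ) 1 \ {t₀}] t₀) := by
    rw [tendsto_nhdsWithin_iff]
    exact ⟨hτ, Filter.Eventually.of_forall fun n => ⟨hτIcc n, hτne n⟩⟩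
  have hLcont : Tendsto (fun n => L (τ n)) atTop (𝓝 (L t₀)) := by
    have h := (hderiv t₀ ht₀).continuousWithinAt
    exact h.tendsto.comp (hτt.mono_right (nhdsWithin_mono _ Set.diff_subset))
  have hslope : Tendsto (fun n => slope L t₀ (τ n)) atTop (𝓝 (L' t₀)) :=
    ((hasDerivWithinAt_iff_tendsto_slope.mp (hderiv t₀ ht₀)).comp hτt)
  -- `L t₀ (u n) → 0`
  have hLu : Tendsto (fun n => L t₀ (u n)) atTop (𝓝 0) := by
    have hb : ∀ n, ‖L t₀ (u n)‖ ≤ ‖L t₀ - L (τ n)‖ := by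
      intro n
      have : L t₀ (u n) = (L t₀ - L (τ n)) (u n) := by
        simp [ContinuousLinearMap.sub_apply, hu0 n]
      rw [this]
      calc ‖(L t₀ - L (τ n)) (u n)‖ ≤ ‖L t₀ - L (τ n)‖ * ‖u n‖ :=
            (L t₀ - L (τ n)).le_opNorm _
        _ = ‖L t₀ - L (τ n)‖ := by rw [hu1 n, mul_one]
    rw [tendsto_zero_iff_norm_tendsto_zero]
    refine squeeze_zero (fun n => norm_nonneg _) hb ?_
    have : Tendsto (fun n => L t₀ - L (τ n)) atTop (𝓝 0) := by
      simpa using (tendsto_const_nhds (x := L t₀)).sub hLcont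
    have h := (continuous_norm.tendsto _).comp this; rw [norm_zero] at h; exact h
  -- decompose `u n`
  set v : ℕ → K := fun n => K.orthogonalProjectionOnto (u n) with hv
  set w : ℕ → H := fun n => u n - (v n : H) with hwdef
  have hwmem : ∀ n, w n ∈ Kᗮ := fun n => K.sub_starProjection_mem_orthogonal (u n)
  have hLw : ∀ n, L t₀ (w n) = L t₀ (u n) := by
    intro n
    have : L t₀ ((v n : H)) = 0 := LinearMap.mem_ker.mp (v n).2
    simp [hwdef, map_sub, this]
  have hw0 : Tendsto w atTop (𝓝 0) := by
    rw [tendsto_zero_iff_norm_tendsto_zero]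
    have hb : ∀ n, ‖w n‖ ≤ c * ‖L t₀ (u n)‖ := by
      intro n
      have h := hc (w n) (hwmem n)
      rwa [hLw n] at h
    refine squeeze_zero (fun n => norm_nonneg _) hb ?_
    have h2 : Tendsto (fun n => c * ‖L t₀ (u n)‖) atTop (𝓝 (c * 0)) :=
      tendsto_const_nhds.mul (tendsto_norm_zero.comp hLu)
    simpa using h2
  -- extract convergent subsequence of `v` in the finite-dimensional space `K`
  have hvb : ∀ n, v n ∈ Metric.closedBall (0 : K) 1 := by
    intro n
    rw [Metric.mem_closedBall, dist_zero_right]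
    calc ‖v n‖ ≤ ‖K.orthogonalProjectionOnto‖ * ‖u n‖ :=
          (K.orthogonalProjectionOnto).le_opNorm _
      _ ≤ 1 * 1 := by
          apply mul_le_mul (K.orthogonalProjectionOnto_norm_le) (le_of_eq (hu1 n))
            (norm_nonneg _) zero_le_one
      _ = 1 := one_mul 1
  obtain ⟨vl, _, φ, hφ, hvl⟩ :=
    (isCompact_closedBall (0 : K) 1).tendsto_subseq hvb
  -- the subsequence of `u` converges to `vl`
  have hvlH : Tendsto (fun k => ((v (φ k) : H))) atTop (𝓝 (vl : H)) :=
    (continuous_subtype_val.tendsto vl).comp hvl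
  have huconv : Tendsto (fun k => u (φ k)) atTop (𝓝 (vl : H)) := by
    have : Tendsto (fun k => (v (φ k) : H) + w (φ k)) atTop (𝓝 ((vl : H) + 0)) :=
      hvlH.add (hw0.comp hφ.tendsto_atTop)
    simpa [hwdef] using this
  have hvlnorm : ‖(vl : H)‖ = 1 := by
    have h1 : Tendsto (fun k => ‖u (φ k)‖) atTop (𝓝 ‖(vl : H)‖) :=
      (continuous_norm.tendsto _).comp huconv
    have h2 : Tendsto (fun k => ‖u (φ k)‖) atTop (𝓝 1) := by
      simpa [hu1] using (tendsto_const_nhds : Tendsto (fun _ : ℕ => (1:ℝ)) atTop (𝓝 1))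
    exact tendsto_nhds_unique h1 h2
  -- the crossing form vanishes at `vl`, contradicting regularity
  have hform : ∀ p ∈ K, ⟪L' t₀ (vl : H), p⟫ = 0 := by
    intro p hp
    have hzero : ∀ n, ⟪(slope L t₀ (τ n)) (u n), p⟫ = (0 : ℝ) := by
      intro n
      have hsym := (hsa t₀ ht₀).isSymmetric
      have hLp : L t₀ p = 0 := LinearMap.mem_ker.mp hp
      have h1 : ⟪L t₀ (u n), p⟫ = (0:ℝ) := by
        have hs := hsym (u n) p
        simp only [ContinuousLinearMap.coe_coe] at hs
        rw [hs, hLp, inner_zero_right]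
      have h2 : slope L t₀ (τ n) = (τ n - t₀)⁻¹ • (L (τ n) - L t₀) := by
        rw [slope_def_module]
      rw [h2]
      simp only [ContinuousLinearMap.smul_apply, ContinuousLinearMap.sub_apply,
        hu0 n, zero_sub, inner_smul_left, inner_neg_left, h1]
      simp
    have hA : Tendsto (fun k => slope L t₀ (τ (φ k))) atTop (𝓝 (L' t₀)) :=
      hslope.comp hφ.tendsto_atTop
    have happ : Tendsto (fun k => (slope L t₀ (τ (φ k))) (u (φ k))) atTop
        (𝓝 (L' t₀ (vl : H))) := by
      have hcont2 : Continuous fun q : (H →L[ℝ] H) × H => q.1 q.2 :=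
        isBoundedBilinearMap_apply.continuous
      exact (hcont2.tendsto (L' t₀, (vl : H))).comp (hA.prodMk_nhds huconv)
    have hlim : Tendsto (fun k => ⟪(slope L t₀ (τ (φ k))) (u (φ k)), p⟫) atTop
        (𝓝 ⟪L' t₀ (vl : H), p⟫) := happ.inner tendsto_const_nhds
    have hlim0 : Tendsto (fun k => ⟪(slope L t₀ (τ (φ k))) (u (φ k)), p⟫) atTop
        (𝓝 (0:ℝ)) := by
      simpa [hzero] using (tendsto_const_nhds : Tendsto (fun _ : ℕ => (0:ℝ)) atTop (𝓝 0))
    exact tendsto_nhds_unique hlim hlim0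
  have := hreg t₀ ht₀ (vl : H) vl.2 hform
  rw [this] at hvlnorm
  simp at hvlnorm
end
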